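/- arXiv:1402.3135 — 4 statements merged into one kernel-verified Lean document; each statement's English description precedes it below -/
import Mathlib

section
/- Let $(X,T)$ be a minimal flow with $T$ abelian and $d \geq 1$. Let $Q^{[d]}$ be the closure of the $\mathcal{G}_d$-orbit of the diagonal $\Delta^{[d]} = \{x^{[d]} : x \in X\}$ in $X^{[d]}$, where $\mathcal{G}_d$ is the group generated by the face action of $T^d$ and the diagonal $T$-action. Then the flow $(Q^{[d]}, \mathcal{G}_d)$ is minimal. -/
/-- The face action of `T^d` on `X^{2^d}`. -/
def faceAct {T X : Type*} [CommGroup T] [MulAction T X] (d : ℕ)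
    (t : Fin d → T) (x : Finset (Fin d) → X) : Finset (Fin d) → X :=
  fun ε => (∏ i ∈ ε, t i) • x ε

/-- `Q^{[d]}`: the closure of the face-group orbits of the diagonal points
(equivalently, of the `𝒢_d`-orbit of the diagonal). -/
def Qcube (T X : Type*) [CommGroup T] [MulAction T X] [TopologicalSpace X] (d : ℕ) :
    Set (Finset (Fin d) → X) :=
  closure {y | ∃ (x : X) (t : Fin d → T), y = faceAct d t fun _ => x}

/-! Auxiliary semigroup: composition semigroup on `Y → Y`. -/

local instance compSemigroup {Y : Type*} : Semigroup (Y → Y) where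
  mul f g := fun x => f (g x)
  mul_assoc f g h := rfl

lemma comp_mul_apply {Y : Type*} (f g : Y → Y) (x : Y) : (f * g) x = f (g x) := rfl

section Generic

variable {M : Type*} [Semigroup M] [TopologicalSpace M] [CompactSpace M] [T2Space M]

/-- Existence of a minimal closed left ideal (within an ambient closed subsemigroup `S`)
inside a given closed left ideal `J`, together with the property `S * q = L` for `q ∈ L`. -/
lemma exists_minimal_left_ideal (hcont : ∀ r : M, Continuous (· * r))
    (S : Set M) (hScl : IsClosed S) (hSmul : ∀ x ∈ S, ∀ y ∈ S, x * y ∈ S)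
    (J : Set M) (hJS : J ⊆ S) (hJne : J.Nonempty) (hJcl : IsClosed J)
    (hJid : ∀ p ∈ S, ∀ q ∈ J, p * q ∈ J) :
    ∃ L, L ⊆ J ∧ L.Nonempty ∧ IsClosed L ∧ (∀ p ∈ S, ∀ q ∈ L, p * q ∈ L) ∧
      (∀ q ∈ L, (fun p => p * q) '' S = L) := by
  classical
  set F : Set (Set M) :=
    {A | A.Nonempty ∧ IsClosed A ∧ A ⊆ J ∧ ∀ p ∈ S, ∀ q ∈ A, p * q ∈ A} with hF
  have hJF : J ∈ F := ⟨hJne, hJcl, le_refl _, hJid⟩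
  have Hchain : ∀ c ⊆ F, IsChain (· ⊆ ·) c → c.Nonempty → ∃ lb ∈ F, ∀ s ∈ c, lb ⊆ s := by
    intro c hcF hc hcne
    refine ⟨⋂₀ c, ⟨?_, ?_, ?_, ?_⟩, fun s hs => Set.sInter_subset_of_mem hs⟩
    · have : Nonempty c := hcne.coe_sort
      rw [Set.sInter_eq_iInter]
      exact IsCompact.nonempty_iInter_of_directed_nonempty_isCompact_isClosed
        ((↑) : c → Set M) (DirectedOn.directed_val (IsChain.directedOn hc.symm))
        (fun i => (hcF i.prop).1) (fun i => (hcF i.prop).2.1.isCompact)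
        (fun i => (hcF i.prop).2.1)
    · exact isClosed_sInter fun A hA => (hcF hA).2.1
    · obtain ⟨A, hA⟩ := hcne
      exact (Set.sInter_subset_of_mem hA).trans (hcF hA).2.2.1
    · intro p hp q hq
      rw [Set.mem_sInter] at hq ⊢
      exact fun A hA => (hcF hA).2.2.2 p hp q (hq A hA)
  obtain ⟨m, hmJ, hmin⟩ := zorn_superset_nonempty F Hchain J hJF
  obtain ⟨hmne, hmcl, hmJ', hmid⟩ := hmin.prop
  refine ⟨m, hmJ', hmne, hmcl, hmid, ?_⟩
  intro q hq
  have hSne : S.Nonempty := hJne.mono hJS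
  have hA : ((fun p => p * q) '' S) ∈ F := by
    refine ⟨hSne.image _, ?_, ?_, ?_⟩
    · exact (hScl.isCompact.image (hcont q)).isClosed
    · rintro _ ⟨p, hp, rfl⟩
      exact hmJ' (hmid p hp q hq)
    · rintro p hp _ ⟨r, hr, rfl⟩
      exact ⟨p * r, hSmul p hp r hr, mul_assoc p r q⟩
  have hsub : (fun p => p * q) '' S ⊆ m := by
    rintro _ ⟨p, hp, rfl⟩; exact hmid p hp q hq
  exact le_antisymm hsub (hmin.2 hA hsub)

/-- Products stay in the closure of a subsemigroup whose elements multiply continuously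
on the left. -/
lemma closure_mul_self (hcont : ∀ r : M, Continuous (· * r))
    (G : Set M) (hG : ∀ a ∈ G, ∀ b ∈ G, a * b ∈ G)
    (hGl : ∀ g ∈ G, Continuous (g * ·)) :
    ∀ a ∈ closure G, ∀ b ∈ closure G, a * b ∈ closure G := by
  intro a ha b hb
  have step1 : ∀ g ∈ G, ∀ b' ∈ closure G, g * b' ∈ closure G := by
    intro g hg b' hb'
    have := map_mem_closure (hGl g hg) hb' (fun x hx => hG g hg x hx)
    simpa using this
  have := map_mem_closure (hcont b) ha (fun g hg => step1 g hg b hb)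
  simpa [closure_closure] using this

end Generic

section Flow

variable {T X : Type*} [CommGroup T] [TopologicalSpace X] [CompactSpace X] [T2Space X]
  [MulAction T X]

/-- The map `x ↦ t • x` as an element of `X → X`. -/
def smulMap (T : Type*) {X : Type*} [CommGroup T] [MulAction T X] (t : T) : X → X :=
  fun x => t • x

/-- The enveloping (Ellis) semigroup of `(X, T)`. -/
def Esg (T X : Type*) [CommGroup T] [TopologicalSpace X] [MulAction T X] : Set (X → X) :=
  closure (Set.range (smulMap T (X := X)))

lemma cont_mul_right_fun {Y : Type*} [TopologicalSpace Y] (r : Y → Y) :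
    Continuous (fun p : Y → Y => p * r) :=
  continuous_pi fun x => continuous_apply (r x)

lemma smulMap_mul (s t : T) : smulMap T (X := X) s * smulMap T t = smulMap T (s * t) := by
  funext x
  simp [smulMap, comp_mul_apply, smul_smul]

lemma Esg_mul (hc : ∀ t : T, Continuous fun x : X => t • x) :
    ∀ a ∈ Esg T X, ∀ b ∈ Esg T X, a * b ∈ Esg T X := by
  apply closure_mul_self (cont_mul_right_fun)
  · rintro _ ⟨s, rfl⟩ _ ⟨t, rfl⟩
    exact ⟨s * t, (smulMap_mul s t).symm⟩
  · rintro _ ⟨s, rfl⟩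
    exact continuous_pi fun x => (hc s).comp (continuous_apply x)

/-- Key fact: there is an idempotent `u` of the enveloping semigroup such that every
idempotent `w ∈ E` with `w * u = w` and `u * w = w` equals `u`. -/
lemma exists_good_idem (hc : ∀ t : T, Continuous fun x : X => t • x) :
    ∃ u : X → X, u ∈ Esg T X ∧ u * u = u ∧
      ∀ w ∈ Esg T X, w * w = w → w * u = w → u * w = w → w = u := by
  classical
  have hEcl : IsClosed (Esg T X) := isClosed_closure
  have hEmul := Esg_mul (T := T) (X := X) hc
  have hEne : (Esg T X).Nonempty := ⟨smulMap T 1, subset_closure ⟨1, rfl⟩⟩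
  obtain ⟨L, hLJ, hLne, hLcl, hLid, hLmin⟩ :=
    exists_minimal_left_ideal (cont_mul_right_fun) (Esg T X) hEcl hEmul (Esg T X)
      (le_refl _) hEne hEcl (fun p hp q hq => hEmul p hp q hq)
  obtain ⟨u, huL, huu⟩ :=
    exists_idempotent_in_compact_subsemigroup (cont_mul_right_fun) L hLne
      hLcl.isCompact (fun p hp q hq => hLid p (hLJ hp) q hq)
  refine ⟨u, hLJ huL, huu, ?_⟩
  intro w hw hww hwu huw
  have hwL : w ∈ L := by
    have : w ∈ (fun p => p * u) '' Esg T X := ⟨w, hw, hwu⟩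
    rwa [hLmin u huL] at this
  have : u ∈ (fun p => p * w) '' Esg T X := by rw [hLmin w hwL]; exact huL
  obtain ⟨p, hp, hpw'⟩ := this
  have hpw : p * w = u := hpw'
  have huw' : u * w = u := by
    calc u * w = p * w * w := by rw [hpw]
    _ = p * (w * w) := mul_assoc _ _ _
    _ = p * w := by rw [hww]
    _ = u := hpw
  rw [← huw, huw']

variable (d : ℕ)

/-- An element of the (image of the) group `𝒢_d` inside `(X → X)^{2^d}`. -/
def gface (s : T) (t : Fin d → T) : Finset (Fin d) → X → X :=
  fun ε x => (s * ∏ i ∈ ε, t i) • x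

/-- The image of `𝒢_d` in `(X → X)^{2^d}`. -/
def GsetD (T X : Type*) [CommGroup T] [MulAction T X] : Set (Finset (Fin d) → X → X) :=
  {g | ∃ (s : T) (t : Fin d → T), g = gface d s t}

/-- The enveloping semigroup of the `𝒢_d`-action, acting coordinatewise. -/
def SsetD (T X : Type*) [CommGroup T] [TopologicalSpace X] [MulAction T X] :
    Set (Finset (Fin d) → X → X) :=
  closure (GsetD d T X)

/-- Coordinatewise action of tuples of self-maps on points of `X^{2^d}`. -/
def cactD (p : Finset (Fin d) → X → X) (z : Finset (Fin d) → X) : Finset (Fin d) → X :=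
  fun ε => p ε (z ε)

lemma cactD_mul (p q : Finset (Fin d) → X → X) (z : Finset (Fin d) → X) :
    cactD d (p * q) z = cactD d p (cactD d q z) := rfl

lemma cont_mul_right_C (r : Finset (Fin d) → X → X) :
    Continuous (fun p : Finset (Fin d) → X → X => p * r) :=
  continuous_pi fun ε => continuous_pi fun x =>
    (continuous_apply (r ε x)).comp (continuous_apply ε)

lemma gface_mul (s s' : T) (t t' : Fin d → T) :
    gface d s t * gface d s' t' = gface (X := X) d (s * s') (fun i => t i * t' i) := by
  funext ε x
  show (s * ∏ i ∈ ε, t i) • ((s' * ∏ i ∈ ε, t' i) • x) = _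
  rw [smul_smul]
  congr 1
  rw [Finset.prod_mul_distrib, mul_mul_mul_comm]

lemma SsetD_mul (hc : ∀ t : T, Continuous fun x : X => t • x) :
    ∀ a ∈ SsetD d T X, ∀ b ∈ SsetD d T X, a * b ∈ SsetD d T X := by
  apply closure_mul_self (cont_mul_right_C d)
  · rintro _ ⟨s, t, rfl⟩ _ ⟨s', t', rfl⟩
    exact ⟨s * s', fun i => t i * t' i, gface_mul d s s' t t'⟩
  · rintro _ ⟨s, t, rfl⟩
    exact continuous_pi fun ε => continuous_pi fun x =>
      (hc _).comp ((continuous_apply x).comp (continuous_apply ε))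

lemma SsetD_proj (p : Finset (Fin d) → X → X) (hp : p ∈ SsetD d T X) (ε : Finset (Fin d)) :
    p ε ∈ Esg T X := by
  refine map_mem_closure (f := fun p : Finset (Fin d) → X → X => p ε)
    (continuous_apply ε) hp ?_
  rintro _ ⟨s, t, rfl⟩
  exact ⟨s * ∏ i ∈ ε, t i, rfl⟩

/-- The constant tuple `δ(u)` belongs to the cube semigroup. -/
lemma diag_mem_SsetD (u : X → X) (hu : u ∈ Esg T X) :
    (fun _ : Finset (Fin d) => u) ∈ SsetD d T X := by
  refine map_mem_closure (f := fun f : X → X => (fun _ : Finset (Fin d) => f))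
    (continuous_pi fun _ => continuous_id) hu ?_
  rintro _ ⟨t, rfl⟩
  refine ⟨t, fun _ => 1, ?_⟩
  funext ε x
  simp [gface, smulMap]

/-- Orbit closures coincide with the action of the enveloping semigroup. -/
lemma closure_orbit_eq (z : Finset (Fin d) → X) :
    closure ((fun g => cactD d g z) '' GsetD d T X) =
      (fun p => cactD d p z) '' SsetD d T X := by
  have hev : Continuous (fun p : Finset (Fin d) → X → X => cactD d p z) :=
    continuous_pi fun ε => (continuous_apply (z ε)).comp (continuous_apply ε)
  apply le_antisymm
  · apply closure_minimal
    · exact Set.image_mono subset_closure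
    · exact ((isClosed_closure.isCompact).image hev).isClosed
  · have := image_closure_subset_closure_image (s := GsetD d T X) hev
    exact this

end Flow

/-- For a minimal flow `(X,T)` with `T` abelian, the flow `(Q^{[d]}, 𝒢_d)` is minimal:
the `𝒢_d`-orbit (face action together with the diagonal action) of every point of
`Q^{[d]}` is dense in `Q^{[d]}`. -/
theorem stmt8 {T X : Type*} [CommGroup T] [TopologicalSpace X] [CompactSpace X] [T2Space X]
    [MulAction T X] (hc : ∀ t : T, Continuous fun x : X => t • x)
    (hmin : ∀ x : X, closure {z : X | ∃ t : T, z = t • x} = Set.univ)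
    (d : ℕ) (hd : 1 ≤ d) :
    ∀ y ∈ Qcube T X d,
      closure {z | ∃ (t : Fin d → T) (s : T), z = fun ε => s • faceAct d t y ε} =
        Qcube T X d := by
  classical
  intro y hy
  rcases isEmpty_or_nonempty X with hX | hX
  · exfalso
    have hgen : {y : Finset (Fin d) → X |
        ∃ (x : X) (t : Fin d → T), y = faceAct d t fun _ => x} = ∅ := by
      ext z; simp
    rw [Qcube, hgen, closure_empty] at hy
    exact hy
  -- the enveloping semigroup machinery
  obtain ⟨u, huE, huu, hkey⟩ := exists_good_idem (T := T) (X := X) hc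
  set δu : Finset (Fin d) → X → X := fun _ => u with hδudef
  have hδuS : δu ∈ SsetD d T X := diag_mem_SsetD d u huE
  have hδuu : δu * δu = δu := by funext ε; exact huu
  have hSmul := SsetD_mul d hc
  have hScl : IsClosed (SsetD d T X) := isClosed_closure
  -- the closed left ideal S * δu
  obtain ⟨L, hLJ, hLne, hLcl, hLid, hLmin⟩ :=
    exists_minimal_left_ideal (cont_mul_right_C d) (SsetD d T X) hScl hSmul
      ((fun p => p * δu) '' SsetD d T X)
      (by rintro _ ⟨p, hp, rfl⟩; exact hSmul p hp δu hδuS)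
      ⟨δu * δu, ⟨δu, hδuS, rfl⟩⟩
      ((hScl.isCompact.image (cont_mul_right_C d δu)).isClosed)
      (by rintro p hp _ ⟨r, hr, rfl⟩
          exact ⟨p * r, hSmul p hp r hr, mul_assoc p r δu⟩)
  have hLS : L ⊆ SsetD d T X := by
    intro a ha
    obtain ⟨p, hp, rfl⟩ := hLJ ha
    exact hSmul p hp δu hδuS
  obtain ⟨v, hvL, hvv⟩ :=
    exists_idempotent_in_compact_subsemigroup (cont_mul_right_C d) L hLne
      hLcl.isCompact (fun p hp q hq => hLid p (hLS hp) q hq)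
  have hvδ : v * δu = v := by
    obtain ⟨q, hq, hqv⟩ := hLJ hvL
    have hqv' : q * δu = v := hqv
    rw [← hqv', mul_assoc, hδuu]
  set w : Finset (Fin d) → X → X := δu * v with hwdef
  have hwL : w ∈ L := hLid δu hδuS v hvL
  have hww : w * w = w := by
    show δu * v * (δu * v) = δu * v
    rw [mul_assoc, ← mul_assoc v, hvδ, hvv]
  have hwδ : w * δu = w := by
    show δu * v * δu = δu * v
    rw [mul_assoc, hvδ]
  have hδw : δu * w = w := by
    show δu * (δu * v) = δu * v
    rw [← mul_assoc, hδuu]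
  have hcoord : ∀ ε : Finset (Fin d), w ε = u := by
    intro ε
    exact hkey (w ε) (SsetD_proj d w (hLS hwL) ε)
      (congrFun hww ε) (congrFun hwδ ε) (congrFun hδw ε)
  have hδuL : δu ∈ L := by
    have : w = δu := funext hcoord
    rwa [this] at hwL
  -- the distinguished diagonal point
  set x : X := u (Classical.arbitrary X) with hxdef
  have hux : u x = x := congrFun huu (Classical.arbitrary X)
  set xd : Finset (Fin d) → X := fun _ => x with hxddef
  have hδuxd : cactD d δu xd = xd := by funext ε; exact hux
  -- Qcube = S ⬝ xd
  have hev : ∀ z : Finset (Fin d) → X,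
      Continuous (fun p : Finset (Fin d) → X → X => cactD d p z) := fun z =>
    continuous_pi fun ε => (continuous_apply (z ε)).comp (continuous_apply ε)
  have hQ : Qcube T X d = (fun p => cactD d p xd) '' SsetD d T X := by
    apply le_antisymm
    · apply closure_minimal
      · rintro _ ⟨x', t, rfl⟩
        have hx' : (fun _ : Finset (Fin d) => x') ∈
            (fun p => cactD d p xd) '' SsetD d T X := by
          rw [← closure_orbit_eq]
          have hx'cl : x' ∈ closure {z : X | ∃ s : T, z = s • x} := by
            rw [hmin x]; trivial
          refine map_mem_closure (f := fun w : X => (fun _ : Finset (Fin d) => w))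
            (continuous_pi fun _ => continuous_id) hx'cl ?_
          rintro _ ⟨s, rfl⟩
          refine ⟨gface d s (fun _ => 1), ⟨s, fun _ => 1, rfl⟩, ?_⟩
          funext ε
          show (s * ∏ _i ∈ ε, (1 : T)) • x = s • x
          simp
        obtain ⟨p, hpS, hpx⟩ := hx'
        have hpx' : cactD d p xd = fun _ : Finset (Fin d) => x' := hpx
        refine ⟨gface d 1 t * p, hSmul _ (subset_closure ⟨1, t, rfl⟩) p hpS, ?_⟩
        show cactD d (gface d 1 t * p) xd = faceAct d t fun _ => x'
        rw [cactD_mul, hpx']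
        funext ε
        show (1 * ∏ i ∈ ε, t i) • x' = (∏ i ∈ ε, t i) • x'
        rw [one_mul]
      · exact ((hScl.isCompact).image (hev xd)).isClosed
    · rw [← closure_orbit_eq]
      apply closure_mono
      rintro _ ⟨g, ⟨s, t, rfl⟩, rfl⟩
      refine ⟨s • x, t, ?_⟩
      funext ε
      show (s * ∏ i ∈ ε, t i) • x = (∏ i ∈ ε, t i) • (s • x)
      rw [smul_smul, mul_comm]
  obtain ⟨p, hpS, hpy⟩ := hQ ▸ hy
  have hpy' : cactD d p xd = y := hpy
  -- the orbit set of y is the G-orbit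
  have hOy : {z | ∃ (t : Fin d → T) (s : T), z = fun ε => s • faceAct d t y ε} =
      (fun g => cactD d g y) '' GsetD d T X := by
    ext z
    constructor
    · rintro ⟨t, s, rfl⟩
      refine ⟨gface d s t, ⟨s, t, rfl⟩, ?_⟩
      funext ε
      show (s * ∏ i ∈ ε, t i) • y ε = s • faceAct d t y ε
      rw [faceAct, ← smul_smul]
    · rintro ⟨g, ⟨s, t, rfl⟩, rfl⟩
      refine ⟨t, s, ?_⟩
      funext ε
      show (s * ∏ i ∈ ε, t i) • y ε = s • faceAct d t y ε
      rw [faceAct, ← smul_smul]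
  rw [hOy, closure_orbit_eq, hQ]
  apply le_antisymm
  · rintro _ ⟨r, hrS, rfl⟩
    refine ⟨r * p, hSmul r hrS p hpS, ?_⟩
    show cactD d (r * p) xd = cactD d r y
    rw [cactD_mul, hpy']
  · -- find r with r ⬝ y = xd
    have hqL : p * δu ∈ L := hLid p hpS δu hδuL
    have hmem : δu ∈ (fun r => r * (p * δu)) '' SsetD d T X := by
      rw [hLmin _ hqL]; exact hδuL
    obtain ⟨r, hrS, hr⟩ := hmem
    have hr' : r * (p * δu) = δu := hr
    have hxd : cactD d r y = xd := by
      calc cactD d r y = cactD d r (cactD d p (cactD d δu xd)) := by rw [hδuxd, hpy']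
      _ = cactD d (r * (p * δu)) xd := by rw [cactD_mul, cactD_mul]
      _ = cactD d δu xd := by rw [hr']
      _ = xd := hδuxd
    rintro _ ⟨q', hq'S, rfl⟩
    refine ⟨q' * r, hSmul q' hq'S r hrS, ?_⟩
    show cactD d (q' * r) y = cactD d q' xd
    rw [cactD_mul, hxd]
end

section
/- Let $(X,T)$ be a minimal flow with $T$ abelian, $d \geq 1$, and $x \in X$. Then the orbit closure $Y_x^{[d]} = \overline{\mathcal{F}_d(x^{[d]})}$ of the diagonal point $x^{[d]}$ under the face group action is a minimal $\mathcal{F}_d$-flow. -/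
open Function Set
set_option linter.unusedSectionVars false

namespace Stmt9

variable {K : Type*} [TopologicalSpace K] [CompactSpace K] [T2Space K]

lemma crc (q : K → K) : Continuous fun p : K → K => p ∘ q :=
  continuous_pi fun z => continuous_apply (q z)

lemma clc {g : K → K} (hg : Continuous g) : Continuous fun p : K → K => g ∘ p :=
  continuous_pi fun z => hg.comp (continuous_apply z)

lemma closure_comp {G : Set (K → K)} (hGc : ∀ g ∈ G, Continuous g)
    (hGm : ∀ g ∈ G, ∀ h ∈ G, g ∘ h ∈ G)
    {p q : K → K} (hp : p ∈ closure G) (hq : q ∈ closure G) : p ∘ q ∈ closure G := by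
  have h1 : ∀ g ∈ G, g ∘ q ∈ closure G := by
    intro g hg
    have hsub : (fun r : K → K => g ∘ r) '' G ⊆ closure G := by
      rintro _ ⟨h, hh, rfl⟩; exact subset_closure (hGm g hg h hh)
    have him := image_closure_subset_closure_image (s := G) (clc (hGc g hg)) ⟨q, hq, rfl⟩
    exact (closure_minimal hsub isClosed_closure) him
  have hsub : (fun r : K → K => r ∘ q) '' G ⊆ closure G := by
    rintro _ ⟨g, hg, rfl⟩; exact h1 g hg
  have him := image_closure_subset_closure_image (s := G) (crc q) ⟨p, hp, rfl⟩
  exact (closure_minimal hsub isClosed_closure) him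

/-- closed left ideals of the compact right-topological monoid `M ⊆ K → K`. -/
structure IsLI (M A : Set (K → K)) : Prop where
  ne : A.Nonempty
  closed : IsClosed A
  sub : A ⊆ M
  ideal : ∀ p ∈ M, ∀ a ∈ A, p ∘ a ∈ A

def IsMinLI (M L : Set (K → K)) : Prop :=
  IsLI M L ∧ ∀ A, IsLI M A → A ⊆ L → A = L

lemma exists_minLI {M A : Set (K → K)} (h : IsLI M A) : ∃ L, IsMinLI M L ∧ L ⊆ A := by
  have H : ∀ c ⊆ {B | IsLI M B}, IsChain (· ⊆ ·) c → c.Nonempty →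
      ∃ lb ∈ {B | IsLI M B}, ∀ s ∈ c, lb ⊆ s := by
    intro c hc hchain hcne
    refine ⟨⋂₀ c, ?_, fun s hs => sInter_subset_of_mem hs⟩
    haveI : Nonempty c := hcne.to_subtype
    obtain ⟨s0, hs0⟩ := hcne
    have hdir : DirectedOn (· ⊇ ·) c := by
      intro a ha b hb
      rcases hchain.total ha hb with h | h
      · exact ⟨a, ha, Subset.rfl, h⟩
      · exact ⟨b, hb, h, Subset.rfl⟩
    have hne : (⋂₀ c).Nonempty :=
      IsCompact.nonempty_sInter_of_directed_nonempty_isCompact_isClosed hdir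
        (fun U hU => (hc hU).ne) (fun U hU => (hc hU).closed.isCompact)
        (fun U hU => (hc hU).closed)
    refine ⟨hne, isClosed_sInter fun U hU => (hc hU).closed,
      (sInter_subset_of_mem hs0).trans (hc hs0).sub, ?_⟩
    intro p hp a ha
    exact fun U hU => (hc hU).ideal p hp a (ha U hU)
  obtain ⟨L, hLA, hLmin⟩ := zorn_superset_nonempty {B | IsLI M B} H A h
  exact ⟨L, ⟨hLmin.prop, fun B hB hBL => (hLmin.eq_of_superset hB hBL).symm⟩, hLA⟩

/-- the image `B ∘ W` of a closed left ideal is a closed left ideal. -/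
lemma isLI_comp {M B : Set (K → K)} (hMm : ∀ p ∈ M, ∀ q ∈ M, p ∘ q ∈ M)
    (hB : IsLI M B) {W : K → K} (hW : W ∈ M) :
    IsLI M ((fun q => q ∘ W) '' B) := by
  refine ⟨hB.ne.image _, ?_, ?_, ?_⟩
  · exact ((hB.closed.isCompact.image (crc W)).isClosed)
  · rintro _ ⟨q, hq, rfl⟩; exact hMm q (hB.sub hq) W hW
  · rintro p hp _ ⟨q, hq, rfl⟩
    exact ⟨p ∘ q, hB.ideal p hp q hq, rfl⟩

/-- transfer lemma: if `L` is a minimal closed left ideal containing `W` and `B` is any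
closed left ideal, then some `m ∈ B` satisfies `m ∘ W = W`. -/
lemma exists_comp_fix {M L B : Set (K → K)} (hMm : ∀ p ∈ M, ∀ q ∈ M, p ∘ q ∈ M)
    (hL : IsMinLI M L) {W : K → K} (hW : W ∈ L) (hB : IsLI M B) :
    ∃ m ∈ B, m ∘ W = W := by
  have hBW : IsLI M ((fun q => q ∘ W) '' B) := isLI_comp hMm hB (hL.1.sub hW)
  have hsub : (fun q => q ∘ W) '' B ⊆ L := by
    rintro _ ⟨q, hq, rfl⟩; exact hL.1.ideal q (hB.sub hq) W hW
  have : (fun q => q ∘ W) '' B = L := hL.2 _ hBW hsub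
  have hWmem : W ∈ (fun q => q ∘ W) '' B := this.symm ▸ hW
  obtain ⟨m, hm, hmW⟩ := hWmem
  exact ⟨m, hm, hmW⟩

/-- right identity lemma: an idempotent `θ` in a minimal left ideal `L` is a right
identity for `L`. -/
lemma comp_idem_eq {M L : Set (K → K)} (hMne : M.Nonempty) (hMcl : IsClosed M)
    (hMm : ∀ p ∈ M, ∀ q ∈ M, p ∘ q ∈ M) (hMid : id ∈ M)
    (hL : IsMinLI M L) {θ : K → K} (hθ : θ ∈ L) (hθθ : θ ∘ θ = θ)
    {m : K → K} (hm : m ∈ L) : m ∘ θ = m := by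
  have hMLI : IsLI M M := ⟨hMne, hMcl, Subset.rfl, fun p hp q hq => hMm p hp q hq⟩
  have hMW : IsLI M ((fun q => q ∘ θ) '' M) := isLI_comp hMm hMLI (hL.1.sub hθ)
  have hsub : (fun q => q ∘ θ) '' M ⊆ L := by
    rintro _ ⟨q, hq, rfl⟩; exact hL.1.ideal q hq θ hθ
  have heq : (fun q => q ∘ θ) '' M = L := hL.2 _ hMW hsub
  have : m ∈ (fun q => q ∘ θ) '' M := heq.symm ▸ hm
  obtain ⟨q, _, rfl⟩ := this
  show (q ∘ θ) ∘ θ = q ∘ θ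
  rw [Function.comp_assoc, hθθ]

/-- Ellis–Namakura for closed subsemigroups of `K → K`. -/
lemma exists_idem {Γ : Set (K → K)} (hne : Γ.Nonempty) (hcl : IsClosed Γ)
    (hmul : ∀ p ∈ Γ, ∀ q ∈ Γ, p ∘ q ∈ Γ) : ∃ w ∈ Γ, w ∘ w = w := by
  haveI : Nonempty Γ := hne.to_subtype
  letI : Semigroup Γ :=
    { mul := fun p q => ⟨p.1 ∘ q.1, hmul _ p.2 _ q.2⟩
      mul_assoc := fun a b c => Subtype.ext rfl }
  haveI : CompactSpace Γ := isCompact_iff_compactSpace.mp hcl.isCompact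
  obtain ⟨e, he⟩ := exists_idempotent_of_compact_t2_of_continuous_mul_left
    (M := Γ) (fun r => Continuous.subtype_mk ((crc r.1).comp continuous_subtype_val) _)
  exact ⟨e.1, e.2, congrArg Subtype.val he⟩

/-- the orbit closure of a point equals the image of the hull. -/
lemma closure_orbit_eq {G : Set (K → K)} (z : K) :
    closure ((fun g => g z) '' G) = (fun p => p z) '' closure G := by
  apply Subset.antisymm
  · apply closure_minimal (image_mono subset_closure)
    exact (isClosed_closure.isCompact.image (continuous_apply z)).isClosed
  · rintro _ ⟨p, hp, rfl⟩
    have : closure G ⊆ (fun p : K → K => p z) ⁻¹' closure ((fun g => g z) '' G) :=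
      closure_minimal (fun g hg => subset_closure ⟨g, hg, rfl⟩)
        (isClosed_closure.preimage (continuous_apply z))
    exact this hp


section MinFlow
variable {T X : Type*} [CommGroup T] [TopologicalSpace X] [CompactSpace X] [T2Space X]
  [MulAction T X]

/-- generators of the Ellis semigroup of `(X,T)`. -/
def GX (T X : Type*) [CommGroup T] [MulAction T X] : Set (X → X) :=
  {g | ∃ t : T, g = fun x => t • x}

lemma GX_cont (hc : ∀ t : T, Continuous fun x : X => t • x) :
    ∀ g ∈ GX T X, Continuous g := by rintro _ ⟨t, rfl⟩; exact hc t

lemma GX_mul : ∀ g ∈ GX T X, ∀ h ∈ GX T X, g ∘ h ∈ GX T X := by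
  rintro _ ⟨t, rfl⟩ _ ⟨s, rfl⟩
  exact ⟨t * s, by funext x; simp [Function.comp, mul_smul]⟩

lemma GX_id : id ∈ GX T X := ⟨1, by funext x; simp⟩

lemma EX_mul (hc : ∀ t : T, Continuous fun x : X => t • x) :
    ∀ p ∈ closure (GX T X), ∀ q ∈ closure (GX T X), p ∘ q ∈ closure (GX T X) :=
  fun p hp q hq => closure_comp (GX_cont hc) GX_mul hp hq

/-- there is an idempotent in a minimal left ideal of `E(X)` fixing `x`. -/
lemma exists_min_idem_fix (hc : ∀ t : T, Continuous fun x : X => t • x)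
    (hmin : ∀ x : X, closure {z : X | ∃ t : T, z = t • x} = Set.univ) (x : X) :
    ∃ LX u, IsMinLI (closure (GX T X)) LX ∧ u ∈ LX ∧ u ∘ u = u ∧ u x = x := by
  set E := closure (GX T X) with hE
  have hEmul := EX_mul (T := T) (X := X) hc
  have hELI : IsLI E E :=
    ⟨⟨id, subset_closure GX_id⟩, isClosed_closure, Subset.rfl, hEmul⟩
  obtain ⟨LX, hLX, -⟩ := exists_minLI hELI
  -- some element of `LX` fixes `x`
  obtain ⟨p₀, hp₀⟩ := hLX.1.ne
  have horb : ∀ t : T, (fun y => t • y) ∘ p₀ ∈ LX := fun t =>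
    hLX.1.ideal _ (subset_closure ⟨t, rfl⟩) _ hp₀
  have hC : ((fun q : X → X => q x) '' LX) = Set.univ := by
    apply Set.eq_univ_of_univ_subset
    rw [← hmin (p₀ x)]
    apply closure_minimal
    · rintro _ ⟨t, rfl⟩
      exact ⟨_, horb t, rfl⟩
    · exact (hLX.1.closed.isCompact.image (continuous_apply x)).isClosed
  have hxC : x ∈ (fun q : X → X => q x) '' LX := hC ▸ Set.mem_univ x
  obtain ⟨p, hp, hpx⟩ := hxC
  -- idempotent in `Γ := LX ∩ {q | q x = x}`
  obtain ⟨u, hu, huu⟩ := exists_idem (Γ := LX ∩ {q | q x = x}) ⟨p, hp, hpx⟩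
    (hLX.1.closed.inter (isClosed_eq (continuous_apply x) continuous_const))
    (by
      rintro a ⟨ha, hax⟩ b ⟨hb, hbx⟩
      refine ⟨hLX.1.ideal a (hLX.1.sub ha) b hb, ?_⟩
      show a (b x) = x
      rw [hbx, hax])
  exact ⟨LX, u, hLX, hu.1, huu, hu.2⟩


section Cube
variable (d : ℕ)

/-- generators of the face-action Ellis semigroup on the cube space. -/
def GZ (T X : Type*) [CommGroup T] [MulAction T X] (d : ℕ) :
    Set ((Finset (Fin d) → X) → (Finset (Fin d) → X)) :=
  {g | ∃ t : Fin d → T, g = faceAct d t}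

lemma GZ_cont (hc : ∀ t : T, Continuous fun x : X => t • x) :
    ∀ g ∈ GZ T X d, Continuous g := by
  rintro _ ⟨t, rfl⟩
  exact continuous_pi fun ε => (hc _).comp (continuous_apply ε)

lemma GZ_mul : ∀ g ∈ GZ T X d, ∀ h ∈ GZ T X d, g ∘ h ∈ GZ T X d := by
  rintro _ ⟨t, rfl⟩ _ ⟨s, rfl⟩
  refine ⟨t * s, ?_⟩
  funext z ε
  show (∏ i ∈ ε, t i) • ((∏ i ∈ ε, s i) • z ε) = (∏ i ∈ ε, (t * s) i) • z ε
  simp [smul_smul, Finset.prod_mul_distrib]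

lemma GZ_id : (id : (Finset (Fin d) → X) → (Finset (Fin d) → X)) ∈ GZ T X d := by
  refine ⟨1, ?_⟩
  funext z ε
  show z ε = (∏ i ∈ ε, (1 : T)) • z ε
  simp

lemma SZ_mul (hc : ∀ t : T, Continuous fun x : X => t • x) :
    ∀ p ∈ closure (GZ T X d), ∀ q ∈ closure (GZ T X d),
      p ∘ q ∈ closure (GZ T X d) :=
  fun p hp q hq => closure_comp (GZ_cont d hc) (GZ_mul d) hp hq

/-- each coordinate of an element of the hull is given by an element of `E(X)`. -/
lemma coord (hc : ∀ t : T, Continuous fun x : X => t • x)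
    {p : (Finset (Fin d) → X) → (Finset (Fin d) → X)} (hp : p ∈ closure (GZ T X d))
    (ε : Finset (Fin d)) :
    ∃ q ∈ closure (GX T X), ∀ z, p z ε = q (z ε) := by
  set A : Set ((Finset (Fin d) → X) → (Finset (Fin d) → X)) :=
    (fun p => fun z => p z ε) ⁻¹'
      ((fun (q : X → X) => fun z : Finset (Fin d) → X => q (z ε)) '' closure (GX T X))
      with hA
  have hAcl : IsClosed A := by
    apply IsClosed.preimage
    · exact continuous_pi fun z => (continuous_apply ε).comp (continuous_apply z)
    · refine (IsCompact.image ?_ ?_).isClosed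
      · exact isClosed_closure.isCompact
      · exact continuous_pi fun z => continuous_apply (z ε)
  have hGA : GZ T X d ⊆ A := by
    rintro _ ⟨t, rfl⟩
    refine ⟨fun x => (∏ i ∈ ε, t i) • x, subset_closure ⟨_, rfl⟩, rfl⟩
  have hpA : p ∈ A := closure_minimal hGA hAcl hp
  obtain ⟨q, hq, hqe⟩ := hpA
  exact ⟨q, hq, fun z => (congrFun hqe z).symm⟩

/-- the `∅` coordinate of every element of the hull is the identity. -/
lemma coord_empty {p : (Finset (Fin d) → X) → (Finset (Fin d) → X)}
    (hp : p ∈ closure (GZ T X d)) : ∀ z, p z ∅ = z ∅ := by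
  have hcl : IsClosed {p : (Finset (Fin d) → X) → (Finset (Fin d) → X) |
      ∀ z, p z ∅ = z ∅} := by
    have he : {p : (Finset (Fin d) → X) → (Finset (Fin d) → X) | ∀ z, p z ∅ = z ∅} =
        ⋂ z, {p | p z ∅ = z ∅} := by ext p; simp
    rw [he]
    exact isClosed_iInter fun z => isClosed_eq
      ((continuous_apply (∅ : Finset (Fin d))).comp (continuous_apply z)) continuous_const
  have hG : GZ T X d ⊆ {p | ∀ z, p z ∅ = z ∅} := by
    rintro _ ⟨t, rfl⟩ z
    show (∏ i ∈ (∅ : Finset (Fin d)), t i) • z ∅ = z ∅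
    simp
  exact closure_minimal hG hcl hp

/-- the single-face embedding of `E(X)` into the hull. -/
lemma phii_mem (hc : ∀ t : T, Continuous fun x : X => t • x) (i : Fin d)
    {u : X → X} (hu : u ∈ closure (GX T X)) :
    (fun (z : Finset (Fin d) → X) ε => if i ∈ ε then u (z ε) else z ε) ∈
      closure (GZ T X d) := by
  classical
  set Φ : (X → X) → ((Finset (Fin d) → X) → (Finset (Fin d) → X)) :=
    fun q => fun z ε => if i ∈ ε then q (z ε) else z ε with hΦ
  have hΦc : Continuous Φ := by
    refine continuous_pi fun z => continuous_pi fun ε => ?_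
    show Continuous fun q : X → X => if i ∈ ε then q (z ε) else z ε
    by_cases h : i ∈ ε
    · simp only [if_pos h]; exact continuous_apply (z ε)
    · simp only [if_neg h]; exact continuous_const
  have hΦG : Φ '' GX T X ⊆ GZ T X d := by
    rintro _ ⟨_, ⟨t, rfl⟩, rfl⟩
    refine ⟨Function.update (1 : Fin d → T) i t, ?_⟩
    funext z ε
    show (if i ∈ ε then t • z ε else z ε) =
      (∏ j ∈ ε, Function.update (1 : Fin d → T) i t j) • z ε
    by_cases h : i ∈ ε
    · rw [Finset.prod_update_of_mem h]
      simp [h]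
    · have : ∀ j ∈ ε, Function.update (1 : Fin d → T) i t j = 1 := fun j hj =>
        Function.update_of_ne (fun hji : j = i => h (by rw [← hji]; exact hj)) _ _
      rw [Finset.prod_congr rfl this]
      simp [h]
  have := image_closure_subset_closure_image (s := GX T X) hΦc ⟨u, hu, rfl⟩
  exact closure_minimal (hΦG.trans subset_closure) isClosed_closure this

/-- the key idempotent `W` (acting by `u` on all nonempty coordinates) is in the hull. -/
lemma W_mem (hc : ∀ t : T, Continuous fun x : X => t • x)
    {u : X → X} (hu : u ∈ closure (GX T X)) (huu : u ∘ u = u) :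
    (fun (z : Finset (Fin d) → X) ε => if ε.Nonempty then u (z ε) else z ε) ∈
      closure (GZ T X d) := by
  classical
  have huu' : ∀ a, u (u a) = u a := fun a => congrFun huu a
  have main : ∀ s : Finset (Fin d),
      (fun (z : Finset (Fin d) → X) ε => if (ε ∩ s).Nonempty then u (z ε) else z ε) ∈
        closure (GZ T X d) := by
    intro s
    induction s using Finset.induction_on with
    | empty => simp; exact subset_closure (GZ_id d)
    | @insert i s hi ih =>
      have heq : (fun (z : Finset (Fin d) → X) ε =>
            if (ε ∩ insert i s).Nonempty then u (z ε) else z ε) =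
          (fun (z : Finset (Fin d) → X) ε => if i ∈ ε then u (z ε) else z ε) ∘
            (fun (z : Finset (Fin d) → X) ε => if (ε ∩ s).Nonempty then u (z ε) else z ε) := by
        funext z ε
        show _ = if i ∈ ε then u (if (ε ∩ s).Nonempty then u (z ε) else z ε)
          else if (ε ∩ s).Nonempty then u (z ε) else z ε
        by_cases h : i ∈ ε
        · have h1 : (ε ∩ insert i s).Nonempty := ⟨i, Finset.mem_inter.2 ⟨h, Finset.mem_insert_self i s⟩⟩
          rw [if_pos h1, if_pos h]
          by_cases h2 : (ε ∩ s).Nonempty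
          · rw [if_pos h2, huu']
          · rw [if_neg h2]
        · have h1 : ε ∩ insert i s = ε ∩ s := by
            ext j
            simp only [Finset.mem_inter, Finset.mem_insert]
            constructor
            · rintro ⟨hj, hj' | hj'⟩
              · exact absurd (hj' ▸ hj) h
              · exact ⟨hj, hj'⟩
            · rintro ⟨hj, hj'⟩; exact ⟨hj, Or.inr hj'⟩
          rw [if_neg h, h1]
      rw [heq]
      exact SZ_mul d hc _ (phii_mem d hc i hu) _ ih
  have := main Finset.univ
  simpa [Finset.inter_univ] using this
end Cube
end MinFlow
end Stmt9

/-- For a minimal flow `(X,T)` with `T` abelian, the face-group orbit closure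
`Y_x^{[d]}` of the diagonal point `x^{[d]}` is a minimal `𝓕_d`-flow: the face orbit
of each of its points is dense in it. -/
theorem stmt9 {T X : Type*} [CommGroup T] [TopologicalSpace X] [CompactSpace X] [T2Space X]
    [MulAction T X] (hc : ∀ t : T, Continuous fun x : X => t • x)
    (hmin : ∀ x : X, closure {z : X | ∃ t : T, z = t • x} = Set.univ)
    (d : ℕ) (hd : 1 ≤ d) (x : X) :
    ∀ y ∈ closure {w | ∃ t : Fin d → T, w = faceAct d t fun _ => x},
      closure {w | ∃ t : Fin d → T, w = faceAct d t y} =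
        closure {w | ∃ t : Fin d → T, w = faceAct d t fun _ => x} := by
  classical
  intro y hy
  set S := closure (Stmt9.GZ T X d) with hSdef
  -- orbit set identification
  have horb : ∀ z : Finset (Fin d) → X,
      {w | ∃ t : Fin d → T, w = faceAct d t z} = (fun g => g z) '' Stmt9.GZ T X d := by
    intro z; ext w
    constructor
    · rintro ⟨t, rfl⟩; exact ⟨faceAct d t, ⟨t, rfl⟩, rfl⟩
    · rintro ⟨g, ⟨t, rfl⟩, rfl⟩; exact ⟨t, rfl⟩
  have horbS : ∀ z : Finset (Fin d) → X,
      closure {w | ∃ t : Fin d → T, w = faceAct d t z} = (fun p => p z) '' S := by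
    intro z; rw [horb z]; exact Stmt9.closure_orbit_eq z
  -- basic semigroup facts
  have hSmul : ∀ p ∈ S, ∀ q ∈ S, p ∘ q ∈ S := Stmt9.SZ_mul d hc
  have hSne : S.Nonempty := ⟨id, subset_closure (Stmt9.GZ_id d)⟩
  have hScl : IsClosed S := isClosed_closure
  -- idempotent u in a minimal left ideal of E(X) fixing x
  obtain ⟨LX, u, hLX, huLX, huu, hux⟩ := Stmt9.exists_min_idem_fix hc hmin x
  have huE : u ∈ closure (Stmt9.GX T X) := hLX.1.sub huLX
  -- the key idempotent W
  set W : (Finset (Fin d) → X) → (Finset (Fin d) → X) :=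
    fun z ε => if ε.Nonempty then u (z ε) else z ε with hWdef
  have hWS : W ∈ S := Stmt9.W_mem d hc huE huu
  have hWx : W (fun _ => x) = (fun _ => x) := by
    funext ε
    show (if ε.Nonempty then u x else x) = x
    by_cases h : ε.Nonempty
    · rw [if_pos h, hux]
    · rw [if_neg h]
  -- minimal left ideal L of S inside S ∘ W
  have hSLI : Stmt9.IsLI S S := ⟨hSne, hScl, Set.Subset.rfl, hSmul⟩
  have hSW : Stmt9.IsLI S ((fun q => q ∘ W) '' S) := Stmt9.isLI_comp hSmul hSLI hWS
  obtain ⟨L, hL, hLsub⟩ := Stmt9.exists_minLI hSW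
  -- idempotent w ∈ L
  obtain ⟨w, hwL, hww⟩ := Stmt9.exists_idem hL.1.ne hL.1.closed
    (fun p hp q hq => hL.1.ideal p (hL.1.sub hp) q hq)
  obtain ⟨r, hrS, hrW⟩ := hLsub hwL
  -- W ∘ w = W, hence W ∈ L
  have hWw : W ∘ w = W := by
    funext z ε
    by_cases h : ε.Nonempty
    · obtain ⟨rε, hrε, hrεe⟩ := Stmt9.coord d hc hrS ε
      set θ : X → X := rε ∘ u with hθdef
      have hwz : ∀ z' : Finset (Fin d) → X, w z' ε = θ (z' ε) := by
        intro z'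
        rw [← hrW]
        show r (W z') ε = θ (z' ε)
        rw [hrεe (W z')]
        show rε (if ε.Nonempty then u (z' ε) else z' ε) = rε (u (z' ε))
        rw [if_pos h]
      have hθLX : θ ∈ LX := hLX.1.ideal rε hrε u huLX
      have hθθ : θ ∘ θ = θ := by
        funext a
        have h1 : w (w (fun _ => a)) ε = w (fun _ => a) ε :=
          congrFun (congrFun hww (fun _ => a)) ε
        have e1 : w ((fun _ => a) : Finset (Fin d) → X) ε = θ a := hwz _
        have e2 : w (w (fun _ => a)) ε = θ ((w (fun _ => a)) ε) := hwz _
        show θ (θ a) = θ a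
        calc θ (θ a) = θ ((w (fun _ => a)) ε) := by
              congr 1
              rw [e1]
          _ = w (w (fun _ => a)) ε := e2.symm
          _ = w (fun _ => a) ε := h1
          _ = θ a := e1
      have huθ : u ∘ θ = u :=
        Stmt9.comp_idem_eq ⟨id, subset_closure Stmt9.GX_id⟩ isClosed_closure
          (Stmt9.EX_mul hc) (subset_closure Stmt9.GX_id) hLX hθLX hθθ huLX
      show W (w z) ε = W z ε
      show (if ε.Nonempty then u ((w z) ε) else (w z) ε) =
        (if ε.Nonempty then u (z ε) else z ε)
      rw [if_pos h, if_pos h, hwz z]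
      exact congrFun huθ (z ε)
    · have hε : ε = ∅ := Finset.not_nonempty_iff_eq_empty.mp h
      subst hε
      show W (w z) ∅ = W z ∅
      show (if (∅ : Finset (Fin d)).Nonempty then u ((w z) ∅) else (w z) ∅) =
        (if (∅ : Finset (Fin d)).Nonempty then u (z ∅) else z ∅)
      rw [if_neg h, if_neg h]
      exact Stmt9.coord_empty d (hL.1.sub hwL) z
  have hWL : W ∈ L := by
    have h1 : W ∘ w ∈ L := hL.1.ideal W hWS w hwL
    rwa [hWw] at h1
  -- main argument
  rw [horbS] at hy
  obtain ⟨p, hpS, hpy⟩ := hy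
  have hSp : Stmt9.IsLI S ((fun q => q ∘ p) '' S) := Stmt9.isLI_comp hSmul hSLI hpS
  obtain ⟨m, hmSp, hmW⟩ := Stmt9.exists_comp_fix hSmul hL hWL hSp
  obtain ⟨s, hsS, rfl⟩ := hmSp
  have hsy : s y = (fun _ => x) := by
    have h1 := congrFun hmW (fun _ => x : Finset (Fin d) → X)
    simp only [Function.comp_apply] at h1
    rw [hWx] at h1
    rw [← hpy]
    exact h1
  rw [horbS, horbS]
  apply Set.Subset.antisymm
  · rintro _ ⟨q, hqS, rfl⟩
    exact ⟨q ∘ p, hSmul q hqS p hpS, congrArg q hpy⟩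
  · rintro _ ⟨q, hqS, rfl⟩
    exact ⟨q ∘ s, hSmul q hqS s hsS, congrArg q hsy⟩
end

section
/- Let $(X,T)$ be a minimal flow, let $p_1, \dots, p_d \in E(X,T)$, and for each nonempty $\epsilon = \{n_1 < \dots < n_k\} \subset \{1,\dots,d\}$ set $q_\epsilon = p_{n_k} \cdots p_{n_1}$. Then for any $x \in X$, the map $(q_\epsilon : \emptyset \neq \epsilon \subset \{1,\dots,d\})$, acting coordinatewise, is an element of the enveloping semigroup $E(Q_{x_*}^{[d]}, \mathcal{F}_d)$. -/
/-- The enveloping semigroup of the flow `(X,T)`. -/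
def envSemigroup (T X : Type*) [Group T] [MulAction T X] [TopologicalSpace X] :
    Set (X → X) :=
  closure (Set.range fun t : T => fun x : X => t • x)

/-- Nonempty subsets of `{1,…,d}`, indexing the coordinates of `X_*^{[d]}`. -/
def NESub (d : ℕ) := {ε : Finset (Fin d) // ε.Nonempty}

/-- `Q_{x_*}^{[d]}`: the projection of `Q_x^{[d]} = Q^{[d]} ∩ ({x} × X^{2^d - 1})`
obtained by forgetting the `∅`-coordinate. -/
def Qstar (T X : Type*) [CommGroup T] [MulAction T X] [TopologicalSpace X] (d : ℕ)
    (x : X) : Set (NESub d → X) :=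
  {z | ∃ y ∈ Qcube T X d, y ∅ = x ∧ ∀ ε : NESub d, z ε = y ε.1}

/-- The ordered product `q_ε = p_{n_k} ∘ ⋯ ∘ p_{n_1}` for `ε = {n_1 < ⋯ < n_k}`. -/
def qcomp {X : Type*} {d : ℕ} (p : Fin d → X → X) (ε : Finset (Fin d)) : X → X :=
  (ε.sort (· ≤ ·)).foldl (fun acc i => p i ∘ acc) id



section aux
variable {X : Type*} {d : ℕ}

lemma foldl_comp_apply (r : Fin d → X → X) (l : List (Fin d)) (f : X → X) (a : X) :
    l.foldl (fun acc i => r i ∘ acc) f a = l.foldl (fun b i => r i b) (f a) := by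
  induction l generalizing f with
  | nil => rfl
  | cons i l ih =>
      simp only [List.foldl_cons]
      rw [ih]
      rfl

lemma qcomp_apply (r : Fin d → X → X) (ε : Finset (Fin d)) (a : X) :
    qcomp r ε a = (ε.sort (· ≤ ·)).foldl (fun b i => r i b) a := by
  unfold qcomp
  rw [foldl_comp_apply]
  rfl

lemma foldl_congr' (r₁ r₂ : Fin d → X → X) (l : List (Fin d))
    (h : ∀ k ∈ l, r₁ k = r₂ k) (a : X) :
    l.foldl (fun b k => r₁ k b) a = l.foldl (fun b k => r₂ k b) a := by
  induction l generalizing a with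
  | nil => rfl
  | cons i l ih =>
      simp only [List.foldl_cons]
      rw [h i (List.mem_cons_self)]
      exact ih (fun k hk => h k (List.mem_cons_of_mem _ hk)) _

lemma cont_foldl [TopologicalSpace X] (s : Fin d → X → X) (l : List (Fin d))
    (h : ∀ k ∈ l, Continuous (s k)) :
    Continuous (fun a : X => l.foldl (fun b k => s k b) a) := by
  induction l with
  | nil => exact continuous_id
  | cons i l ih =>
      simp only [List.foldl_cons]
      exact (ih (fun k hk => h k (List.mem_cons_of_mem _ hk))).comp (h i (List.mem_cons_self))

lemma foldl_smul {T : Type*} [CommGroup T] [MulAction T X] (t : Fin d → T)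
    (l : List (Fin d)) (a : X) :
    l.foldl (fun b i => t i • b) a = (l.map t).prod • a := by
  induction l generalizing a with
  | nil => simp
  | cons i l ih => simp [ih, smul_smul, mul_comm]

lemma qcomp_smul {T : Type*} [CommGroup T] [MulAction T X] (t : Fin d → T)
    (ε : Finset (Fin d)) (a : X) :
    qcomp (fun i a => t i • a) ε a = (∏ i ∈ ε, t i) • a := by
  rw [qcomp_apply, foldl_smul]
  congr 1
  have h1 : List.Perm ((ε.sort (· ≤ ·)).map t) (ε.toList.map t) :=
    (Finset.sort_perm_toList ε (· ≤ ·)).map t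
  rw [h1.prod_eq, Finset.prod_map_toList]

end aux

lemma cont_update_foldl [TopologicalSpace X] (c : Fin d → X → X) (j : Fin d)
    (hcont : ∀ i, j < i → Continuous (c i)) (l : List (Fin d))
    (hl : List.Pairwise (· < ·) l) (a : X) :
    Continuous (fun q : X → X => l.foldl (fun b i => Function.update c j q i b) a) := by
  induction l generalizing a with
  | nil => exact continuous_const
  | cons i l ih =>
      obtain ⟨hhead, htail⟩ := List.pairwise_cons.mp hl
      simp only [List.foldl_cons]
      by_cases hij : i = j
      · subst hij
        have h1 : ∀ q : X → X,
            l.foldl (fun b k => Function.update c i q k b) (Function.update c i q i a)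
              = l.foldl (fun b k => c k b) (q a) := by
          intro q
          rw [Function.update_self]
          exact foldl_congr' _ _ l
            (fun k hk => Function.update_of_ne (hhead k hk).ne' _ _) _
        simp only [h1]
        exact (cont_foldl c l (fun k hk => hcont k (hhead k hk))).comp (continuous_apply a)
      · simp only [Function.update_of_ne hij]
        exact ih htail (c i a)

/-- Given `p_1,…,p_d ∈ E(X,T)`, the coordinatewise map `(q_ε)_{∅ ≠ ε ⊆ {1,…,d}}` is an
element of the enveloping semigroup `E(Q_{x_*}^{[d]}, 𝓕_d)`: its restriction to
`Q_{x_*}^{[d]}` lies in the closure of the face-group translations. -/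
theorem stmt10 {T X : Type*} [CommGroup T] [TopologicalSpace X] [CompactSpace X] [T2Space X]
    [MulAction T X] (hc : ∀ t : T, Continuous fun x : X => t • x)
    (hmin : ∀ x : X, closure {z : X | ∃ t : T, z = t • x} = Set.univ)
    (d : ℕ) (hd : 1 ≤ d) (p : Fin d → X → X)
    (hp : ∀ i, p i ∈ envSemigroup T X) (x : X) :
    (fun (y : Qstar T X d x) (ε : NESub d) => qcomp p ε.1 (y.1 ε)) ∈
      closure (Set.range fun t : Fin d → T =>
        fun (y : Qstar T X d x) (ε : NESub d) => (∏ i ∈ ε.1, t i) • y.1 ε) := by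
  classical
  let F : (Fin d → X → X) → (Qstar T X d x → NESub d → X) :=
    fun r y ε => qcomp r ε.1 (y.1 ε)
  let S : Set (Qstar T X d x → NESub d → X) := Set.range fun t : Fin d → T =>
    fun y ε => (∏ i ∈ ε.1, t i) • y.1 ε
  let mix : ℕ → (Fin d → T) → Fin d → X → X :=
    fun j t i => if i.val < j then p i else fun a => t i • a
  show F p ∈ closure S
  suffices h : ∀ j : ℕ, ∀ t : Fin d → T, F (mix j t) ∈ closure S by
    have hmix : mix d (fun _ => 1) = p := by
      funext i
      simp only [mix, if_pos i.isLt]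
    have := h d (fun _ => 1)
    rwa [hmix] at this
  intro j
  induction j with
  | zero =>
      intro t
      apply subset_closure
      refine ⟨t, ?_⟩
      have hmix0 : mix 0 t = fun i a => t i • a := by
        funext i a
        simp [mix]
      funext y ε
      show (∏ i ∈ ε.1, t i) • y.1 ε = F (mix 0 t) y ε
      rw [show F (mix 0 t) y ε = qcomp (mix 0 t) ε.1 (y.1 ε) from rfl, hmix0, qcomp_smul]
  | succ j ih =>
      intro t
      by_cases hj : j < d
      · set j' : Fin d := ⟨j, hj⟩ with hj'def
        set c : Fin d → X → X := mix j t with hcdef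
        have hij_ne : ∀ i : Fin d, i ≠ j' → ((i.val < j) ↔ (i.val < j + 1)) := by
          intro i hne
          have : i.val ≠ j := fun h => hne (Fin.ext h)
          omega
        have hup1 : Function.update c j' (p j') = mix (j + 1) t := by
          funext i
          rcases eq_or_ne i j' with rfl | hne
          · rw [Function.update_self]
            simp only [mix, hj'def, if_pos (Nat.lt_succ_self j)]
          · rw [Function.update_of_ne hne, hcdef]
            simp only [mix]
            by_cases h : i.val < j
            · rw [if_pos h, if_pos ((hij_ne i hne).mp h)]
            · rw [if_neg h, if_neg (fun h' => h ((hij_ne i hne).mpr h'))]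
        have hup2 : ∀ s : T, Function.update c j' (fun a => s • a)
            = mix j (Function.update t j' s) := by
          intro s
          funext i
          rcases eq_or_ne i j' with rfl | hne
          · rw [Function.update_self]
            simp only [mix, hj'def, lt_irrefl, if_neg (lt_irrefl j), Function.update_self]
          · rw [Function.update_of_ne hne, hcdef]
            simp only [mix, Function.update_of_ne hne]
        have hccont : ∀ i : Fin d, j' < i → Continuous (c i) := by
          intro i hi
          have hnlt : ¬ i.val < j := by
            have h2 : j'.val < i.val := hi
            rw [hj'def] at h2
            simp only [] at h2
            omega
          rw [hcdef]
          simp only [mix, if_neg hnlt]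
          exact hc (t i)
        have hφcont : Continuous fun q : X → X => F (Function.update c j' q) := by
          apply continuous_pi
          intro y
          apply continuous_pi
          intro ε
          have : (fun q : X → X => F (Function.update c j' q) y ε)
              = fun q : X → X => (ε.1.sort (· ≤ ·)).foldl
                  (fun b i => Function.update c j' q i b) (y.1 ε) := by
            funext q
            exact qcomp_apply _ _ _
          rw [this]
          exact cont_update_foldl c j' hccont _ (Finset.sortedLT_sort _).pairwise _
        have hmaps : Set.MapsTo (fun q : X → X => F (Function.update c j' q))
            (Set.range fun t : T => fun a : X => t • a) (closure S) := by
          rintro q ⟨s, rfl⟩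
          show F (Function.update c j' fun a => s • a) ∈ closure S
          rw [hup2 s]
          exact ih (Function.update t j' s)
        have hpj : p j' ∈ closure (Set.range fun t : T => fun a : X => t • a) := hp j'
        have := map_mem_closure hφcont hpj hmaps
        rw [closure_closure] at this
        show F (mix (j + 1) t) ∈ closure S
        rw [← hup1]
        exact this
      · have heq : mix (j + 1) t = mix j t := by
          funext i
          have hi : i.val < d := i.isLt
          have h1 : i.val < j := by omega
          simp only [mix, if_pos h1, if_pos (by omega : i.val < j + 1)]
        rw [show F (mix (j+1) t) = F (mix j t) from by rw [heq]]
        exact ih t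
end

section
/- Let $(X,T)$ be a minimal metric flow with $T$ abelian, $d \geq 1$, and $x, y \in X$. Then $(x,y) \in RP^{[d]}$ if and only if there exists $a_* \in X^{2^d - 1}$ such that $(x, a_*, y, a_*) \in Q^{[d+1]}$. -/
/-- The regionally proximal relation of order `d`. -/
def RP (T : Type*) {X : Type*} [CommGroup T] [MulAction T X] [MetricSpace X]
    (d : ℕ) (x y : X) : Prop :=
  ∀ δ > (0 : ℝ), ∃ (x' y' : X) (t : Fin d → T),
    dist x x' < δ ∧ dist y y' < δ ∧
    ∀ ε : Finset (Fin d), ε.Nonempty →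
      dist ((∏ i ∈ ε, t i) • x') ((∏ i ∈ ε, t i) • y') < δ

/-- `ε ⊆ {1,…,d+1}` restricted to the first `d` indices. -/
noncomputable def lowSet (d : ℕ) (ε : Finset (Fin (d + 1))) : Finset (Fin d) :=
  Finset.preimage ε Fin.castSucc (Function.Injective.injOn (Fin.castSucc_injective d))

/-- The point `(x, a_*, y, a_*) ∈ X^{[d+1]} = X^{[d]} × X^{[d]}`: the `∅`-coordinate is
`x`, the `{d+1}`-coordinate is `y`, and any other coordinate `ε` is `a (ε \ {d+1})`. -/
noncomputable def pointXY {X : Type*} (d : ℕ) (x y : X) (a : Finset (Fin d) → X) :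
    Finset (Fin (d + 1)) → X :=
  fun ε =>
    if Fin.last d ∈ ε then (if ε = {Fin.last d} then y else a (lowSet d ε))
    else (if ε = ∅ then x else a (lowSet d ε))

lemma map_lowSet (d : ℕ) (ε : Finset (Fin (d+1))) :
    (lowSet d ε).map Fin.castSuccEmb = ε.erase (Fin.last d) := by
  ext j
  simp only [Finset.mem_map, lowSet, Finset.mem_preimage, Finset.mem_erase, Fin.castSuccEmb,
    Function.Embedding.coeFn_mk]
  constructor
  · rintro ⟨i, hi, rfl⟩; exact ⟨(Fin.castSucc_lt_last i).ne, hi⟩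
  · rintro ⟨hne, hj⟩
    obtain ⟨i, rfl⟩ := Fin.exists_castSucc_eq.mpr hne
    exact ⟨i, hj, rfl⟩

lemma last_not_mem_map (d : ℕ) (ε : Finset (Fin d)) :
    Fin.last d ∉ ε.map Fin.castSuccEmb := by
  simp only [Finset.mem_map, Fin.castSuccEmb, Function.Embedding.coeFn_mk]
  rintro ⟨i, -, h⟩
  exact (Fin.castSucc_lt_last i).ne h

lemma lowSet_map (d : ℕ) (ε : Finset (Fin d)) :
    lowSet d (ε.map Fin.castSuccEmb) = ε := by
  apply Finset.map_injective Fin.castSuccEmb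
  rw [map_lowSet, Finset.erase_eq_of_notMem (last_not_mem_map d ε)]

section
variable {T X : Type*} [CommGroup T] [MulAction T X]

lemma faceAct_diag (d : ℕ) (t : Fin (d+1) → T) (z : X) (E : Finset (Fin (d+1))) :
    faceAct (d+1) t (fun _ => z) E = (∏ i ∈ E, t i) • z := rfl

lemma faceAct_empty (d : ℕ) (t : Fin (d+1) → T) (z : X) :
    faceAct (d+1) t (fun _ => z) ∅ = z := by
  rw [faceAct_diag, Finset.prod_empty, one_smul]

lemma faceAct_singleton_last (d : ℕ) (t : Fin (d+1) → T) (z : X) :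
    faceAct (d+1) t (fun _ => z) {Fin.last d} = t (Fin.last d) • z := by
  rw [faceAct_diag, Finset.prod_singleton]

lemma faceAct_map (d : ℕ) (t : Fin (d+1) → T) (z : X) (ε : Finset (Fin d)) :
    faceAct (d+1) t (fun _ => z) (ε.map Fin.castSuccEmb)
      = (∏ i ∈ ε, t i.castSucc) • z := by
  rw [faceAct_diag, Finset.prod_map]; rfl

lemma faceAct_insert_last (d : ℕ) (t : Fin (d+1) → T) (z : X) (ε : Finset (Fin d)) :
    faceAct (d+1) t (fun _ => z) (insert (Fin.last d) (ε.map Fin.castSuccEmb))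
      = (∏ i ∈ ε, t i.castSucc) • (t (Fin.last d) • z) := by
  rw [faceAct_diag, Finset.prod_insert (last_not_mem_map d ε), Finset.prod_map, mul_comm,
    mul_smul]; rfl

end

lemma lowSet_insert_last (d : ℕ) (E : Finset (Fin (d+1))) :
    lowSet d (insert (Fin.last d) E) = lowSet d E := by
  ext i
  simp only [lowSet, Finset.mem_preimage, Finset.mem_insert,
    (Fin.castSucc_lt_last i).ne, false_or]

section
variable {X : Type*} (d : ℕ) (x y : X) (a : Finset (Fin d) → X)

lemma pointXY_empty : pointXY d x y a ∅ = x := by simp [pointXY]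

lemma pointXY_last : pointXY d x y a {Fin.last d} = y := by simp [pointXY]

lemma pointXY_map {ε : Finset (Fin d)} (hε : ε.Nonempty) :
    pointXY d x y a (ε.map Fin.castSuccEmb) = a ε := by
  rw [pointXY, if_neg (last_not_mem_map d ε),
    if_neg (by simpa [← Finset.nonempty_iff_ne_empty] using (Finset.map_nonempty (f := Fin.castSuccEmb)).mpr hε),
    lowSet_map]

lemma pointXY_insert {ε : Finset (Fin d)} (hε : ε.Nonempty) :
    pointXY d x y a (insert (Fin.last d) (ε.map Fin.castSuccEmb)) = a ε := by
  rw [pointXY, if_pos (Finset.mem_insert_self _ _), if_neg, lowSet_insert_last, lowSet_map]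
  intro h
  obtain ⟨i, hi⟩ := hε
  have : i.castSucc ∈ insert (Fin.last d) (ε.map Fin.castSuccEmb) := by
    exact Finset.mem_insert_of_mem (Finset.mem_map_of_mem Fin.castSuccEmb hi)
  rw [h, Finset.mem_singleton] at this
  exact (Fin.castSucc_lt_last i).ne this

end

/-- Host–Kra–Maass criterion. -/
theorem stmt15 {T X : Type*} [CommGroup T] [MetricSpace X] [CompactSpace X]
    [MulAction T X] (hc : ∀ t : T, Continuous fun x : X => t • x)
    (hmin : ∀ x : X, closure {z : X | ∃ t : T, z = t • x} = Set.univ)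
    (d : ℕ) (hd : 1 ≤ d) (x y : X) :
    RP T d x y ↔
      ∃ a : Finset (Fin d) → X, pointXY d x y a ∈ Qcube T X (d + 1) := by
  constructor
  · intro hRP
    have key : ∀ n : ℕ, ∃ p : Finset (Fin (d+1)) → X,
        (∃ (z : X) (tt : Fin (d+1) → T), p = faceAct (d+1) tt fun _ => z) ∧
        dist (p ∅) x < 1/(n+1) ∧ dist (p {Fin.last d}) y < 1/(n+1) ∧
        ∀ ε : Finset (Fin d), ε.Nonempty →
          dist (p (ε.map Fin.castSuccEmb))
            (p (insert (Fin.last d) (ε.map Fin.castSuccEmb))) < 1/(n+1) := by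
      intro n
      set δ : ℝ := 1/(2*(n+1)) with hδdef
      have hδ : 0 < δ := by positivity
      have h2δ : δ + δ = 1/(n+1) := by rw [hδdef]; field_simp; norm_num
      obtain ⟨x', y', t, hx', hy', ht⟩ := hRP δ hδ
      have hF : UniformContinuous
          (fun u : X => fun ε : Finset (Fin d) => (∏ i ∈ ε, t i) • u) :=
        CompactSpace.uniformContinuous_of_continuous (continuous_pi fun ε => hc _)
      obtain ⟨η, hη, hFη⟩ := Metric.uniformContinuous_iff.mp hF δ hδ
      have hy'mem : y' ∈ closure {z : X | ∃ s : T, z = s • x'} := by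
        rw [hmin x']; trivial
      obtain ⟨w, ⟨s, rfl⟩, hw⟩ := Metric.mem_closure_iff.mp hy'mem (min η δ) (lt_min hη hδ)
      have hwη : dist y' (s • x') < η := hw.trans_le (min_le_left _ _)
      have hwδ : dist y' (s • x') < δ := hw.trans_le (min_le_right _ _)
      refine ⟨faceAct (d+1) (Fin.snoc t s) (fun _ => x'), ⟨x', _, rfl⟩, ?_, ?_, ?_⟩
      · rw [faceAct_empty, dist_comm]
        calc dist x x' < δ := hx'
          _ ≤ 1/(n+1) := by linarith
      · rw [faceAct_singleton_last, Fin.snoc_last, dist_comm]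
        calc dist y (s • x') ≤ dist y y' + dist y' (s • x') := dist_triangle _ _ _
          _ < δ + δ := add_lt_add hy' hwδ
          _ = 1/(n+1) := h2δ
      · intro ε hε
        rw [faceAct_map, faceAct_insert_last, Fin.snoc_last]
        have hprod : (∏ i ∈ ε, (Fin.snoc t s : Fin (d+1) → T) i.castSucc) = ∏ i ∈ ε, t i :=
          Finset.prod_congr rfl fun i _ => by simp
        rw [hprod]
        have h1 : dist ((∏ i ∈ ε, t i) • y') ((∏ i ∈ ε, t i) • (s • x')) < δ := by
          have := hFη hwη
          calc dist ((∏ i ∈ ε, t i) • y') ((∏ i ∈ ε, t i) • (s • x'))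
              ≤ dist (fun σ : Finset (Fin d) => (∏ i ∈ σ, t i) • y')
                (fun σ : Finset (Fin d) => (∏ i ∈ σ, t i) • (s • x')) :=
                dist_le_pi_dist (fun σ : Finset (Fin d) => (∏ i ∈ σ, t i) • y')
                  (fun σ : Finset (Fin d) => (∏ i ∈ σ, t i) • (s • x')) ε
            _ < δ := this
        calc dist ((∏ i ∈ ε, t i) • x') ((∏ i ∈ ε, t i) • (s • x'))
            ≤ dist ((∏ i ∈ ε, t i) • x') ((∏ i ∈ ε, t i) • y')
              + dist ((∏ i ∈ ε, t i) • y') ((∏ i ∈ ε, t i) • (s • x')) := dist_triangle _ _ _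
          _ < δ + δ := add_lt_add (ht ε hε) h1
          _ = 1/(n+1) := h2δ
    choose p hpG hp0 hp1 hp2 using key
    have hQcomp : IsCompact (Qcube T X (d+1)) :=
      (isClosed_closure : IsClosed (Qcube T X (d+1))).isCompact
    have hpQ : ∀ n, p n ∈ Qcube T X (d+1) := fun n => subset_closure (hpG n)
    obtain ⟨q, hq, φ, hφ, hlim⟩ := hQcomp.tendsto_subseq hpQ
    have hbound : ∀ n : ℕ, (1:ℝ)/(φ n + 1) ≤ 1/(n+1) := by
      intro n
      apply one_div_le_one_div_of_le (by positivity)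
      have : (n:ℝ) ≤ φ n := Nat.cast_le.mpr hφ.le_apply
      linarith
    have heval : ∀ E : Finset (Fin (d+1)),
        Filter.Tendsto (fun n => p (φ n) E) Filter.atTop (nhds (q E)) := fun E =>
      ((continuous_apply E).tendsto q).comp hlim
    have keylim : ∀ (E : Finset (Fin (d+1))) (c : X),
        (∀ n : ℕ, dist (p n E) c < 1/(n+1)) → q E = c := by
      intro E c hb
      refine tendsto_nhds_unique (heval E) ?_
      rw [tendsto_iff_dist_tendsto_zero]
      refine squeeze_zero (fun n => dist_nonneg) (fun n => ?_)
        tendsto_one_div_add_atTop_nhds_zero_nat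
      exact le_trans (hb (φ n)).le (hbound n)
    have hxq : q ∅ = x := keylim ∅ x hp0
    have hyq : q {Fin.last d} = y := keylim _ y hp1
    have hpair : ∀ ε : Finset (Fin d), ε.Nonempty →
        q (ε.map Fin.castSuccEmb) = q (insert (Fin.last d) (ε.map Fin.castSuccEmb)) := by
      intro ε hε
      rw [← dist_eq_zero]
      refine tendsto_nhds_unique ((heval _).dist (heval _)) ?_
      refine squeeze_zero (fun n => dist_nonneg) (fun n => ?_)
        tendsto_one_div_add_atTop_nhds_zero_nat
      exact le_trans (hp2 (φ n) ε hε).le (hbound n)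
    refine ⟨fun σ => q (σ.map Fin.castSuccEmb), ?_⟩
    have hfun : pointXY d x y (fun σ => q (σ.map Fin.castSuccEmb)) = q := by
      funext E
      by_cases hl : Fin.last d ∈ E
      · by_cases hE : E = {Fin.last d}
        · rw [pointXY, if_pos hl, if_pos hE, hE, hyq]
        · rw [pointXY, if_pos hl, if_neg hE]
          have hne : (lowSet d E).Nonempty := by
            rw [← Finset.map_nonempty (f := Fin.castSuccEmb), map_lowSet,
              Finset.nonempty_iff_ne_empty]
            intro h
            rcases (Finset.erase_eq_empty_iff E (Fin.last d)).mp h with h' | h'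
            · exact Finset.notMem_empty _ (h' ▸ hl)
            · exact hE h'
          show q ((lowSet d E).map Fin.castSuccEmb) = q E
          rw [hpair _ hne, map_lowSet, Finset.insert_erase hl]
      · by_cases hE : E = ∅
        · rw [pointXY, if_neg hl, if_pos hE, hE, hxq]
        · rw [pointXY, if_neg hl, if_neg hE]
          show q ((lowSet d E).map Fin.castSuccEmb) = q E
          rw [map_lowSet, Finset.erase_eq_of_notMem hl]
    rw [hfun]
    exact hq
  · rintro ⟨a, ha⟩ δ hδ
    obtain ⟨p, hp, hdist⟩ := Metric.mem_closure_iff.mp ha (δ/2) (by linarith)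
    obtain ⟨z, tt, rfl⟩ := hp
    refine ⟨z, tt (Fin.last d) • z, fun i => tt i.castSucc, ?_, ?_, ?_⟩
    · calc dist x z = dist (pointXY d x y a ∅) (faceAct (d+1) tt (fun _ => z) ∅) := by
            rw [pointXY_empty, faceAct_empty]
        _ ≤ dist (pointXY d x y a) (faceAct (d+1) tt (fun _ => z)) := dist_le_pi_dist _ _ _
        _ < δ := by linarith
    · calc dist y (tt (Fin.last d) • z)
          = dist (pointXY d x y a {Fin.last d}) (faceAct (d+1) tt (fun _ => z) {Fin.last d}) := by
            rw [pointXY_last, faceAct_singleton_last]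
        _ ≤ dist (pointXY d x y a) (faceAct (d+1) tt (fun _ => z)) := dist_le_pi_dist _ _ _
        _ < δ := by linarith
    · intro ε hε
      have h1 : dist (a ε) ((∏ i ∈ ε, tt i.castSucc) • z) < δ/2 := by
        calc dist (a ε) ((∏ i ∈ ε, tt i.castSucc) • z)
            = dist (pointXY d x y a (ε.map Fin.castSuccEmb))
              (faceAct (d+1) tt (fun _ => z) (ε.map Fin.castSuccEmb)) := by
              rw [pointXY_map _ _ _ _ hε, faceAct_map]
          _ ≤ _ := dist_le_pi_dist _ _ _
          _ < δ/2 := hdist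
      have h2 : dist (a ε) ((∏ i ∈ ε, tt i.castSucc) • (tt (Fin.last d) • z)) < δ/2 := by
        calc dist (a ε) ((∏ i ∈ ε, tt i.castSucc) • (tt (Fin.last d) • z))
            = dist (pointXY d x y a (insert (Fin.last d) (ε.map Fin.castSuccEmb)))
              (faceAct (d+1) tt (fun _ => z) (insert (Fin.last d) (ε.map Fin.castSuccEmb))) := by
              rw [pointXY_insert _ _ _ _ hε, faceAct_insert_last]
          _ ≤ _ := dist_le_pi_dist _ _ _
          _ < δ/2 := hdist
      calc dist ((∏ i ∈ ε, tt i.castSucc) • z) ((∏ i ∈ ε, tt i.castSucc) • (tt (Fin.last d) • z))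
          ≤ dist ((∏ i ∈ ε, tt i.castSucc) • z) (a ε)
            + dist (a ε) ((∏ i ∈ ε, tt i.castSucc) • (tt (Fin.last d) • z)) := dist_triangle _ _ _
        _ < δ := by rw [dist_comm] at h1; linarith
end
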